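/- Let (A,∘,B) be a finite-dimensional quadratic Novikov algebra, J a nonzero isotropic ideal of (A,∘) (i.e., B(J,J)=0), V a vector space complement of J^⊥ in A (A = J^⊥ ⊕ V), and S = J ⊕ V. Then B restricted to S × S is nondegenerate, and A = J ⊕ S^⊥ ⊕ V as vector spaces. -/

import Mathlib

private lemma fin3_iSup_ne0 {α : Type*} [CompleteLattice α] (f : Fin 3 → α) :
    (⨆ j, ⨆ _ : j ≠ (0 : Fin 3), f j) = f 1 ⊔ f 2 := by
  refine le_antisymm (iSup_le fun j => iSup_le fun hj => ?_)
    (sup_le (le_iSup_of_le 1 (by simp)) (le_iSup_of_le 2 (by simp)))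
  fin_cases j
  · exact absurd rfl hj
  · exact le_sup_left
  · exact le_sup_right

private lemma fin3_iSup_ne1 {α : Type*} [CompleteLattice α] (f : Fin 3 → α) :
    (⨆ j, ⨆ _ : j ≠ (1 : Fin 3), f j) = f 0 ⊔ f 2 := by
  refine le_antisymm (iSup_le fun j => iSup_le fun hj => ?_)
    (sup_le (le_iSup_of_le 0 (by simp)) (le_iSup_of_le 2 (by simp)))
  fin_cases j
  · exact le_sup_left
  · exact absurd rfl hj
  · exact le_sup_right

private lemma fin3_iSup_ne2 {α : Type*} [CompleteLattice α] (f : Fin 3 → α) :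
    (⨆ j, ⨆ _ : j ≠ (2 : Fin 3), f j) = f 0 ⊔ f 1 := by
  refine le_antisymm (iSup_le fun j => iSup_le fun hj => ?_)
    (sup_le (le_iSup_of_le 0 (by simp)) (le_iSup_of_le 1 (by simp)))
  fin_cases j
  · exact le_sup_left
  · exact le_sup_right
  · exact absurd rfl hj

/-- Let J be a nonzero isotropic ideal of a finite-dimensional quadratic
Novikov algebra, V a complement of J^⊥, and S = J ⊔ V. Then B is nondegenerate on S and
A = J ⊕ S^⊥ ⊕ V as vector spaces. -/
theorem quadratic_novikov_isotropic_triple_decomposition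
    {k A : Type*} [Field k] [CharZero k] [AddCommGroup A] [Module k A]
    [FiniteDimensional k A]
    (mul : A →ₗ[k] A →ₗ[k] A) (B : LinearMap.BilinForm k A)
    (hnov1 : ∀ a b c, mul (mul a b) c - mul a (mul b c) = mul (mul b a) c - mul b (mul a c))
    (hnov2 : ∀ a b c, mul (mul a b) c = mul (mul a c) b)
    (hsym : ∀ a b, B a b = B b a)
    (hnd : ∀ a, (∀ b, B a b = 0) → a = 0)
    (hinv : ∀ a b c, B (mul a b) c = -(B b (mul a c + mul c a)))
    (J : Submodule k A) (hJne : J ≠ ⊥)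
    (hJideal : ∀ a ∈ J, ∀ x : A, mul a x ∈ J ∧ mul x a ∈ J)
    (hJiso : ∀ x ∈ J, ∀ y ∈ J, B x y = 0)
    (V : Submodule k A) (hV : IsCompl (B.orthogonal J) V)
    (S : Submodule k A) (hS : S = J ⊔ V) :
    (∀ x ∈ S, (∀ y ∈ S, B x y = 0) → x = 0) ∧
    DirectSum.IsInternal (![J, B.orthogonal S, V] : Fin 3 → Submodule k A) := by
  have hJS : J ≤ S := hS ▸ le_sup_left
  have hVS : V ≤ S := hS ▸ le_sup_right
  have key : ∀ x ∈ S, (∀ y ∈ S, B x y = 0) → x = 0 := by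
    intro x hx hxall
    rw [hS] at hx
    obtain ⟨j, hj, v, hv, rfl⟩ := Submodule.mem_sup.mp hx
    have hv0 : v = 0 := by
      have hvorth : v ∈ B.orthogonal J := by
        rw [LinearMap.BilinForm.mem_orthogonal_iff]
        intro n hn
        have h1 : B (j + v) n = 0 := hxall n (hJS hn)
        have h2 : B j n = 0 := hJiso j hj n hn
        have : B v n = 0 := by
          have := h1
          rw [map_add, LinearMap.add_apply, h2, zero_add] at this
          exact this
        simpa [LinearMap.BilinForm.IsOrtho, hsym n v] using this
      exact (Submodule.disjoint_def.mp hV.disjoint) v hvorth hv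
    subst hv0
    rw [add_zero]
    apply hnd
    intro y
    have hy : y ∈ B.orthogonal J ⊔ V := by rw [hV.sup_eq_top]; exact Submodule.mem_top
    obtain ⟨w, hw, v', hv', rfl⟩ := Submodule.mem_sup.mp hy
    have h1 : B j w = 0 := by
      have := (LinearMap.BilinForm.mem_orthogonal_iff.mp hw) j hj
      simpa [LinearMap.BilinForm.IsOrtho, hsym j w] using this
    have h2 : B j v' = 0 := by
      have := hxall v' (hVS hv')
      simpa using this
    rw [map_add, h1, h2, add_zero]
  refine ⟨key, ?_⟩
  have hrefl : B.IsRefl := fun x y h => by rw [hsym]; exact h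
  have hrest : (B.restrict S).Nondegenerate := by
    refine ⟨fun x h => ?_, fun x h => ?_⟩
    · have : (x : A) = 0 := key x x.2 fun y hy => h ⟨y, hy⟩
      exact Subtype.ext this
    · have : (x : A) = 0 := key x x.2 fun y hy => by rw [hsym]; exact h ⟨y, hy⟩
      exact Subtype.ext this
  have hcompl : IsCompl S (B.orthogonal S) :=
    (LinearMap.BilinForm.restrict_nondegenerate_iff_isCompl_orthogonal hrefl).mp hrest
  have hSd : Disjoint S (B.orthogonal S) := hcompl.disjoint
  have hJsub : J ≤ B.orthogonal J := by
    intro x hx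
    rw [LinearMap.BilinForm.mem_orthogonal_iff]
    intro n hn
    exact hJiso n hn x hx
  have hJV : Disjoint J V := hV.disjoint.mono_left hJsub
  rw [DirectSum.isInternal_submodule_iff_iSupIndep_and_iSup_eq_top]
  constructor
  · intro i
    fin_cases i
    · rw [show ((⟨0, by norm_num⟩ : Fin 3)) = (0 : Fin 3) from rfl, fin3_iSup_ne0]
      simp only [Matrix.cons_val_zero, Matrix.cons_val_one, Matrix.head_cons,
        Matrix.cons_val_two, Matrix.tail_cons]
      rw [Submodule.disjoint_def]
      intro x hxJ hxsup
      obtain ⟨s, hs, v, hv, rfl⟩ := Submodule.mem_sup.mp hxsup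
      have hs0 : s = 0 := by
        have hsS : s ∈ S := by
          have : s = (s + v) - v := by abel
          rw [this]
          exact Submodule.sub_mem S (hJS hxJ) (hVS hv)
        exact (Submodule.disjoint_def.mp hSd) s hsS hs
      subst hs0
      rw [zero_add] at hxJ ⊢
      exact (Submodule.disjoint_def.mp hJV) v hxJ hv
    · rw [show ((⟨1, by norm_num⟩ : Fin 3)) = (1 : Fin 3) from rfl, fin3_iSup_ne1]
      simp only [Matrix.cons_val_zero, Matrix.cons_val_one, Matrix.head_cons,
        Matrix.cons_val_two, Matrix.tail_cons]
      have : J ⊔ V = S := hS.symm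
      rw [this]
      exact hSd.symm
    · rw [show ((⟨2, by norm_num⟩ : Fin 3)) = (2 : Fin 3) from rfl, fin3_iSup_ne2]
      simp only [Matrix.cons_val_zero, Matrix.cons_val_one, Matrix.head_cons,
        Matrix.cons_val_two, Matrix.tail_cons]
      rw [Submodule.disjoint_def]
      intro x hxV hxsup
      obtain ⟨j, hj, s, hs, rfl⟩ := Submodule.mem_sup.mp hxsup
      have hs0 : s = 0 := by
        have hsS : s ∈ S := by
          have : s = (j + s) - j := by abel
          rw [this]
          exact Submodule.sub_mem S (hVS hxV) (hJS hj)
        exact (Submodule.disjoint_def.mp hSd) s hsS hs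
      subst hs0
      rw [add_zero] at hxV ⊢
      exact (Submodule.disjoint_def.mp hJV) j hj hxV
  · rw [eq_top_iff, ← hcompl.sup_eq_top]
    refine sup_le ?_ (le_iSup_of_le 1 (by simp))
    rw [hS]
    exact sup_le (le_iSup_of_le 0 (by simp)) (le_iSup_of_le 2 (by simp))
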